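/- For real t > -1 and natural number k, ∑_{m=1}^{∞} (-1)^{m-1}·C(t+1, m+k+1) = C(t, k+1), where C denotes the generalized binomial coefficient. -/

import Mathlib

open Filter

noncomputable def rchoose (t : ℝ) (m : ℕ) : ℝ :=
  (∏ i ∈ Finset.range m, (t - i)) / m.factorial

lemma rchoose_succ (t : ℝ) (n : ℕ) :
    rchoose t (n + 1) = rchoose t n * (t - n) / (n + 1) := by
  unfold rchoose
  rw [Finset.prod_range_succ, Nat.factorial_succ]
  push_cast
  have h1 : (n.factorial : ℝ) ≠ 0 := by positivity
  field_simp

lemma pascal (t : ℝ) (n : ℕ) :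
    rchoose (t + 1) (n + 1) = rchoose t n + rchoose t (n + 1) := by
  unfold rchoose
  rw [Finset.prod_range_succ' (fun i => t + 1 - (i : ℝ)), Finset.prod_range_succ,
    Nat.factorial_succ]
  have heq : ∀ i : ℕ, t + 1 - ((i : ℝ) + 1) = t - i := by intro i; ring
  push_cast
  simp only [heq]
  have h1 : (n.factorial : ℝ) ≠ 0 := by positivity
  have h2 : (n : ℝ) + 1 ≠ 0 := by positivity
  field_simp
  ring

lemma abs_rchoose_succ {t : ℝ} {n : ℕ} (hn : t ≤ n) :
    |rchoose t (n + 1)| = |rchoose t n| * ((n - t) / (n + 1)) := by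
  rw [rchoose_succ, abs_div, abs_mul, abs_of_nonneg (by positivity : (0:ℝ) ≤ (n:ℝ) + 1),
    abs_sub_comm, abs_of_nonneg (by linarith : (0:ℝ) ≤ (n:ℝ) - t)]
  ring

lemma tendsto_rchoose {t : ℝ} (ht : -1 < t) :
    Tendsto (fun n => rchoose t n) atTop (nhds 0) := by
  obtain ⟨N, hN⟩ := exists_nat_gt t
  set S : ℕ → ℝ := fun n => ∑ i ∈ Finset.range n, (1:ℝ) / (N + i + 1) with hS
  have key : ∀ n : ℕ, |rchoose t (N + n)| ≤ |rchoose t N| * Real.exp (-(t+1) * S n) := by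
    intro n
    induction n with
    | zero => simp [hS]
    | succ n ih =>
      have h0n : (0:ℝ) ≤ (n:ℝ) := Nat.cast_nonneg n
      have hle : t ≤ ((N + n : ℕ) : ℝ) := by push_cast; linarith
      have h1 : |rchoose t (N + (n+1))| =
          |rchoose t (N + n)| * ((((N + n : ℕ) : ℝ) - t) / (((N + n : ℕ) : ℝ) + 1)) := by
        rw [show N + (n+1) = (N + n) + 1 from rfl, abs_rchoose_succ hle]
      have hden : (0:ℝ) < ((N + n : ℕ) : ℝ) + 1 := by positivity
      have hfac : (((N + n : ℕ) : ℝ) - t) / (((N + n : ℕ) : ℝ) + 1) ≤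
          Real.exp (-((t+1) / (((N + n : ℕ) : ℝ) + 1))) := by
        have hx : (((N + n : ℕ) : ℝ) - t) / (((N + n : ℕ) : ℝ) + 1)
            = 1 - (t+1) / (((N + n : ℕ) : ℝ) + 1) := by field_simp; ring
        rw [hx]
        have := Real.add_one_le_exp (-((t+1) / (((N + n : ℕ) : ℝ) + 1)))
        linarith
      have hfac0 : (0:ℝ) ≤ (((N + n : ℕ) : ℝ) - t) / (((N + n : ℕ) : ℝ) + 1) := by
        apply div_nonneg _ (le_of_lt hden); linarith
      calc |rchoose t (N + (n+1))|
          = |rchoose t (N + n)| * ((((N + n : ℕ) : ℝ) - t) / (((N + n : ℕ) : ℝ) + 1)) := h1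
        _ ≤ (|rchoose t N| * Real.exp (-(t+1) * S n)) *
              Real.exp (-((t+1) / (((N + n : ℕ) : ℝ) + 1))) := by
            apply mul_le_mul ih hfac hfac0
            positivity
        _ = |rchoose t N| * Real.exp (-(t+1) * S (n+1)) := by
            rw [mul_assoc, ← Real.exp_add]
            congr 2
            rw [hS]
            simp only [Finset.sum_range_succ]
            push_cast
            ring
  have hStop : Tendsto S atTop atTop := by
    have hh := Real.tendsto_sum_range_one_div_nat_succ_atTop
    have heq : ∀ n, (∑ i ∈ Finset.range (N + n), (1:ℝ) / (i + 1))
        = (∑ i ∈ Finset.range N, (1:ℝ) / (i + 1)) + S n := by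
      intro n
      rw [Finset.sum_range_add]
      congr 1
      apply Finset.sum_congr rfl
      intro i _
      push_cast
      ring
    have h2 : Tendsto (fun n : ℕ => ∑ i ∈ Finset.range (N + n), (1:ℝ) / (i + 1)) atTop atTop :=
      hh.comp ((tendsto_add_atTop_nat N).congr (fun n => Nat.add_comm n N))
    have h3 := tendsto_atTop_add_const_right atTop
      (-(∑ i ∈ Finset.range N, (1:ℝ) / (i + 1))) h2
    exact h3.congr (fun n => by rw [heq n]; ring)
  have hexp : Tendsto (fun n => |rchoose t N| * Real.exp (-(t+1) * S n)) atTop (nhds 0) := by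
    rw [show (0:ℝ) = |rchoose t N| * 0 from (mul_zero _).symm]
    exact (Real.tendsto_exp_atBot.comp
      (Tendsto.const_mul_atTop_of_neg (by linarith : -(t+1) < 0) hStop)).const_mul _
  have htail : Tendsto (fun n => rchoose t (N + n)) atTop (nhds 0) :=
    squeeze_zero_norm (fun n => key n) hexp
  have htail' : Tendsto (fun n => rchoose t (n + N)) atTop (nhds 0) :=
    htail.congr (fun n => by rw [Nat.add_comm])
  exact (tendsto_add_atTop_iff_nat N).1 htail'

lemma summable_abs_rchoose {t : ℝ} (ht : 0 < t) :
    Summable (fun n => |rchoose t n|) := by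
  obtain ⟨N, hN⟩ := exists_nat_gt t
  have key : ∀ n : ℕ,
      t * (∑ i ∈ Finset.range n, |rchoose t (N + i)|) + ((N + n : ℕ) : ℝ) * |rchoose t (N + n)|
        = (N : ℝ) * |rchoose t N| := by
    intro n
    induction n with
    | zero => simp
    | succ n ih =>
      have h0n : (0:ℝ) ≤ (n:ℝ) := Nat.cast_nonneg n
      have hle : t ≤ ((N + n : ℕ) : ℝ) := by push_cast; linarith
      have h1 : |rchoose t (N + (n+1))| =
          |rchoose t (N + n)| * ((((N + n : ℕ) : ℝ) - t) / (((N + n : ℕ) : ℝ) + 1)) := by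
        rw [show N + (n+1) = (N + n) + 1 from rfl, abs_rchoose_succ hle]
      have hden : ((N + (n+1) : ℕ) : ℝ) = ((N + n : ℕ) : ℝ) + 1 := by push_cast; ring
      have hden0 : ((N + n : ℕ) : ℝ) + 1 ≠ 0 := by positivity
      rw [Finset.sum_range_succ, hden, h1]
      rw [← ih]
      field_simp
      ring
  have hbound : ∀ n : ℕ,
      ∑ i ∈ Finset.range n, |rchoose t (N + i)| ≤ (N : ℝ) * |rchoose t N| / t := by
    intro n
    have h1 := key n
    have h2 : (0:ℝ) ≤ ((N + n : ℕ) : ℝ) * |rchoose t (N + n)| := by positivity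
    rw [le_div_iff₀ ht]
    linarith [h1]
  have hsum : Summable (fun i => |rchoose t (N + i)|) :=
    summable_of_sum_range_le (fun n => abs_nonneg _) hbound
  have hsum' : Summable (fun i => |rchoose t (i + N)|) :=
    hsum.congr (fun n => by rw [Nat.add_comm])
  exact (summable_nat_add_iff (f := fun n => |rchoose t n|) N).1 hsum'

theorem alternating_binomial_tail_sum (t : ℝ) (ht : -1 < t) (k : ℕ) :
    ∑' m : ℕ, (-1:ℝ) ^ m * rchoose (t + 1) ((m + 1) + k + 1) = rchoose t (k + 1) := by
  have hsum : Summable (fun m : ℕ => (-1:ℝ) ^ m * rchoose (t + 1) ((m + 1) + k + 1)) := by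
    have h1 : Summable (fun n => |rchoose (t+1) n|) := summable_abs_rchoose (by linarith)
    have h2 : Summable (fun m => |rchoose (t+1) (m + (k+2))|) :=
      (summable_nat_add_iff (f := fun n => |rchoose (t+1) n|) (k+2)).2 h1
    apply Summable.of_norm
    refine h2.congr (fun m => ?_)
    simp only [norm_mul, norm_pow, norm_neg, norm_one, one_pow, one_mul, Real.norm_eq_abs]
    congr 2
    omega
  have hpart : ∀ N : ℕ, (∑ m ∈ Finset.range N, (-1:ℝ) ^ m * rchoose (t + 1) ((m + 1) + k + 1))
      = rchoose t (k + 1) - (-1:ℝ) ^ N * rchoose t (N + k + 1) := by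
    intro N
    induction N with
    | zero => simp
    | succ n ih =>
      rw [Finset.sum_range_succ, ih]
      have hp := pascal t (n + k + 1)
      rw [show (n + 1) + k + 1 = (n + k + 1) + 1 from by omega, hp]
      rw [pow_succ]
      push_cast
      ring
  have h0 : Tendsto (fun N : ℕ => (-1:ℝ) ^ N * rchoose t (N + k + 1)) atTop (nhds 0) := by
    have h := tendsto_rchoose ht
    have h2 := h.comp (tendsto_add_atTop_nat (k+1))
    have h3 : Tendsto (fun N : ℕ => |rchoose t (N + (k+1))|) atTop (nhds |0|) :=
      ((continuous_abs.tendsto 0).comp h2 : )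
    rw [abs_zero] at h3
    have hg : Tendsto (fun N : ℕ => |rchoose t (N + k + 1)|) atTop (nhds 0) :=
      h3.congr (fun n => by norm_num [Nat.add_assoc])
    exact squeeze_zero_norm
      (fun n => le_of_eq (by simp [Real.norm_eq_abs, abs_mul, abs_pow])) hg
  have hlim : Tendsto (fun N => ∑ m ∈ Finset.range N,
      (-1:ℝ) ^ m * rchoose (t + 1) ((m + 1) + k + 1)) atTop (nhds (rchoose t (k+1))) := by
    simp only [hpart]
    have := Filter.Tendsto.sub (tendsto_const_nhds (x := rchoose t (k+1)) (f := atTop)) h0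
    simpa using this
  exact ((Summable.hasSum_iff_tendsto_nat hsum).2 hlim).tsum_eq
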